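/- Let B be a GCM and {β_i : i ∈ I} a linearly independent set of positive real roots of g(B) with β_i − β_j ∉ Δ(B) for all i,j, and let A = (β_j(β_i^∨))_{i,j∈I}. Define π̄ : Q(A) → Q(B) by α_i ↦ β_i. Then π̄(s_i(λ)) = s_{β_i}(π̄(λ)) for all i ∈ I and λ ∈ Q(A), where s_{β}(μ) = μ − ⟨μ, β^∨⟩β is the reflection in the real root β. Consequently, for any nontrivial w ∈ W(A) with reduced decomposition w = s_{i_1}⋯s_{i_k}, the element s_{β_{i_1}}⋯s_{β_{i_k}} ∈ W(B) is nontrivial. -/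

import Mathlib

namespace Stmt16

variable {J : Type*} [DecidableEq J]

/-- A generalised Cartan matrix. -/
def IsGCM {I : Type*} (a : I → I → ℤ) : Prop :=
  (∀ i, a i i = 2) ∧ (∀ i j, i ≠ j → a i j ≤ 0) ∧ (∀ i j, a i j = 0 ↔ a j i = 0)

/-- Pairing `⟨α, h⟩` on `Q(B) × Q^∨(B)` with `⟨α_j, α_i^∨⟩ = b_{ij}`. -/
def pairing (b : J → J → ℤ) (α h : J →₀ ℤ) : ℤ :=
  α.sum fun j c => h.sum fun i d => d * c * b i j

/-- Simple reflection on the root lattice of `B`. -/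
noncomputable def sQ (b : J → J → ℤ) (i : J) (α : J →₀ ℤ) : J →₀ ℤ :=
  α - pairing b α (Finsupp.single i 1) • Finsupp.single i 1

/-- Simple reflection on the coroot lattice of `B`. -/
noncomputable def sV (b : J → J → ℤ) (i : J) (h : J →₀ ℤ) : J →₀ ℤ :=
  h - pairing b (Finsupp.single i 1) h • Finsupp.single i 1

/-- Action of a word in the simple reflections on the root lattice. -/
noncomputable def applyQ (b : J → J → ℤ) (l : List J) (α : J →₀ ℤ) : J →₀ ℤ :=
  l.foldr (fun i x => sQ b i x) α

/-- Action of a word in the simple reflections on the coroot lattice. -/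
noncomputable def applyV (b : J → J → ℤ) (l : List J) (h : J →₀ ℤ) : J →₀ ℤ :=
  l.foldr (fun i x => sV b i x) h

/-- The real roots `Δ^re(B) = W(B) · {α_j}`. -/
def realRoots (b : J → J → ℤ) : Set (J →₀ ℤ) :=
  {β | ∃ (l : List J) (m : J), β = applyQ b l (Finsupp.single m 1)}

/-- The Dynkin diagram of `b`. -/
def dynkinGraph (b : J → J → ℤ) : SimpleGraph J :=
  SimpleGraph.fromRel fun i j => b i j ≠ 0

/-- Connected support in the Dynkin diagram. -/
def SuppConnected (b : J → J → ℤ) (α : J →₀ ℤ) : Prop :=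
  ((dynkinGraph b).induce {i : J | α i ≠ 0}).Connected

/-- The fundamental imaginary chamber. -/
def fundChamber (b : J → J → ℤ) : Set (J →₀ ℤ) :=
  {α | (∀ j, 0 ≤ α j) ∧ SuppConnected b α ∧ ∀ i, pairing b α (Finsupp.single i 1) ≤ 0}

/-- The imaginary roots `Δ^im(B) = W(B) · (K ∪ −K)`. -/
def imaginaryRoots (b : J → J → ℤ) : Set (J →₀ ℤ) :=
  {β | ∃ (l : List J) (α : J →₀ ℤ),
    (α ∈ fundChamber b ∨ -α ∈ fundChamber b) ∧ β = applyQ b l α}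

/-- The roots `Δ(B) = Δ^re(B) ∪ Δ^im(B)`. -/
def roots (b : J → J → ℤ) : Set (J →₀ ℤ) :=
  realRoots b ∪ imaginaryRoots b

/-- Reflection in a real root `β` (with coroot `β^∨`):
`s_β(μ) = μ − ⟨μ, β^∨⟩ β`. -/
noncomputable def sBeta (b : J → J → ℤ) (β βv : J →₀ ℤ) (μ : J →₀ ℤ) : J →₀ ℤ :=
  μ - pairing b μ βv • β

/-- Simple reflection on the root lattice `Q(A) = ⊕_{i ∈ I} ℤα_i` of the GCM
`A = (⟨β_j, β_i^∨⟩)`: `s_i(λ) = λ − ⟨λ, α_i^∨⟩ α_i`. -/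
noncomputable def sQA {I : Type*} [DecidableEq I] (A : I → I → ℤ) (i : I) (lam : I →₀ ℤ) :
    I →₀ ℤ :=
  lam - (lam.sum fun j c => c * A i j) • Finsupp.single i 1

/-- The linear map `π̄ : Q(A) → Q(B)`, `α_i ↦ β_i`. -/
noncomputable def piBar {I : Type*} (β : I → (J →₀ ℤ)) (lam : I →₀ ℤ) : J →₀ ℤ :=
  lam.sum fun i c => c • β i

lemma pairing_add_left (b : J → J → ℤ) (α₁ α₂ h : J →₀ ℤ) :
    pairing b (α₁ + α₂) h = pairing b α₁ h + pairing b α₂ h := by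
  unfold pairing
  rw [Finsupp.sum_add_index']
  · intro j; simp
  · intro j c₁ c₂
    rw [← Finsupp.sum_add]
    congr 1; ext i d; ring

lemma pairing_smul_left (b : J → J → ℤ) (c : ℤ) (α h : J →₀ ℤ) :
    pairing b (c • α) h = c * pairing b α h := by
  unfold pairing
  rw [Finsupp.sum_smul_index (by intro i; simp), Finsupp.mul_sum]
  congr 1; ext j d
  rw [Finsupp.mul_sum]
  congr 1; ext i e
  ring

lemma piBar_single {I : Type*} (β : I → (J →₀ ℤ)) (i : I) (c : ℤ) :
    piBar β (Finsupp.single i c) = c • β i := by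
  unfold piBar
  rw [Finsupp.sum_single_index (by simp)]

lemma piBar_eq_total {I : Type*} (β : I → (J →₀ ℤ)) (lam : I →₀ ℤ) :
    piBar β lam = Finsupp.linearCombination ℤ β lam := by
  rw [Finsupp.linearCombination_apply]; rfl

lemma piBar_add {I : Type*} (β : I → (J →₀ ℤ)) (lam₁ lam₂ : I →₀ ℤ) :
    piBar β (lam₁ + lam₂) = piBar β lam₁ + piBar β lam₂ := by
  simp [piBar_eq_total]

lemma piBar_sub {I : Type*} (β : I → (J →₀ ℤ)) (lam₁ lam₂ : I →₀ ℤ) :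
    piBar β (lam₁ - lam₂) = piBar β lam₁ - piBar β lam₂ := by
  simp [piBar_eq_total]

lemma piBar_smul {I : Type*} (β : I → (J →₀ ℤ)) (c : ℤ) (lam : I →₀ ℤ) :
    piBar β (c • lam) = c • piBar β lam := by
  simp [piBar_eq_total]

lemma pairing_piBar {I : Type*} (b : J → J → ℤ) (β : I → (J →₀ ℤ)) (h : J →₀ ℤ)
    (lam : I →₀ ℤ) :
    pairing b (piBar β lam) h = lam.sum fun j c => c * pairing b (β j) h := by
  induction lam using Finsupp.induction_linear with
  | zero => simp [piBar, pairing]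
  | add f g hf hg =>
      rw [piBar_add, pairing_add_left, hf, hg,
        Finsupp.sum_add_index' (by intro j; simp) (by intro j c₁ c₂; ring)]
  | single i c =>
      rw [piBar_single, pairing_smul_left,
        Finsupp.sum_single_index (by simp)]

/-- Let `B` be a GCM, `{β_i : i ∈ I}` a linearly independent finite set of
positive real roots of `𝔤(B)` (with `β_i = w_i α_{m_i}` and coroots
`β_i^∨ = w_i α_{m_i}^∨`) such that `β_i − β_j ∉ Δ(B)` for all `i, j`, and let
`A = (β_j(β_i^∨))_{i,j}`.  Then `π̄ : Q(A) → Q(B)`, `α_i ↦ β_i`, satisfies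
`π̄(s_i(λ)) = s_{β_i}(π̄(λ))` for all `i, λ`; consequently, for any word
`s_{i_1} ⋯ s_{i_k}` acting nontrivially on `Q(A)` (e.g. a reduced decomposition
of a nontrivial element of `W(A)`), the element `s_{β_{i_1}} ⋯ s_{β_{i_k}}` of
`W(B)` is nontrivial. -/
theorem stmt16 {I : Type*} [Fintype I] [DecidableEq I]
    (b : J → J → ℤ) (hB : IsGCM b)
    (β : I → (J →₀ ℤ)) (l : I → List J) (m : I → J)
    (hreal : ∀ i, β i = applyQ b (l i) (Finsupp.single (m i) 1))
    (hpos : ∀ i, ∀ j, 0 ≤ β i j)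
    (hind : LinearIndependent ℤ β)
    (hdiff : ∀ i i' : I, β i - β i' ∉ roots b)
    (A : I → I → ℤ)
    (hA : ∀ i i', A i i' = pairing b (β i') (applyV b (l i) (Finsupp.single (m i) 1))) :
    (∀ (i : I) (lam : I →₀ ℤ),
        piBar β (sQA A i lam)
          = sBeta b (β i) (applyV b (l i) (Finsupp.single (m i) 1)) (piBar β lam)) ∧
    (∀ w : List I,
      (∃ lam : I →₀ ℤ, w.foldr (fun i x => sQA A i x) lam ≠ lam) →
      ∃ μ : J →₀ ℤ,
        w.foldr (fun i x =>
          sBeta b (β i) (applyV b (l i) (Finsupp.single (m i) 1)) x) μ ≠ μ) := by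
  have key : ∀ (i : I) (lam : I →₀ ℤ),
      piBar β (sQA A i lam)
        = sBeta b (β i) (applyV b (l i) (Finsupp.single (m i) 1)) (piBar β lam) := by
    intro i lam
    unfold sQA sBeta
    rw [piBar_sub, piBar_smul, piBar_single, one_smul, pairing_piBar]
    congr 2
    exact Finsupp.sum_congr fun j _ => by rw [hA i j]
  refine ⟨key, ?_⟩
  intro w ⟨lam, hlam⟩
  have comm : ∀ (w : List I) (lam : I →₀ ℤ),
      piBar β (w.foldr (fun i x => sQA A i x) lam)
        = w.foldr (fun i x =>
            sBeta b (β i) (applyV b (l i) (Finsupp.single (m i) 1)) x) (piBar β lam) := by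
    intro w
    induction w with
    | nil => intro lam; rfl
    | cons i t ih => intro lam; simp only [List.foldr_cons, key, ih]
  refine ⟨piBar β lam, fun hcontr => hlam ?_⟩
  have hinj : Function.Injective (piBar β) := by
    have := (linearIndependent_iff_injective_finsuppLinearCombination).mp hind
    intro x y hxy
    exact this (by rwa [← piBar_eq_total, ← piBar_eq_total])
  exact hinj (by rw [comm, hcontr])

end Stmt16
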